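/- Let h : F_q → F_q with h(0) = 0. Then the set H = {x/(x-y) : x, y ∈ F_q, h(x) ≠ 0, h(y) = 0} is contained in D_h^{-1} D_h, where D_h is the direction set of h, D_h^{-1} = {d^{-1} : d ∈ D_h, d ≠ 0}, and D_h^{-1} D_h is the set of products. -/

import Mathlib

open Pointwise

variable {F : Type*} [Field F] [Fintype F]

/-- The set of directions determined by the graph of `f`. -/
def dirs (f : F → F) : Set F := {d | ∃ x y : F, x ≠ y ∧ d = (f x - f y) / (x - y)}

/-- The set of inverses of the nonzero elements of `A`. -/
def invSet (A : Set F) : Set F := {b | ∃ a ∈ A, a ≠ 0 ∧ b = a⁻¹}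

theorem stmt1 (h : F → F) (h0 : h 0 = 0) :
    {z : F | ∃ x y : F, h x ≠ 0 ∧ h y = 0 ∧ z = x / (x - y)} ⊆
      invSet (dirs h) * dirs h := by
  rintro z ⟨x, y, hx, hy, rfl⟩
  have hx0 : x ≠ 0 := fun e => hx (e ▸ h0)
  have hxy : x ≠ y := fun e => hx (e ▸ hy)
  refine ⟨(h x / x)⁻¹, ⟨h x / x, ⟨x, 0, hx0, by simp [h0]⟩,
    div_ne_zero hx hx0, rfl⟩, (h x - h y) / (x - y), ⟨x, y, hxy, rfl⟩, ?_⟩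
  rw [hy]
  field_simp
  rw [sub_zero]
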